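/- Let u ∈ R^d, let π_S be the orthogonal projection onto a subspace S, and let p ∈ [1,2). Define Φ_u(S) = ‖u‖_2^p - ‖u - π_S u‖_2^p. Then ‖u - π_T u‖_2^{2-p} / ‖π_S u‖_2^2 ≥ (Φ_u(S) - Φ_u(T))^{2/p - 1} / (2 Φ_u(S)^{2/p}) for any subspaces S, T with Φ_u(S) ≥ Φ_u(T) > 0 and Φ_u(S) > 0, where π_T is the orthogonal projection onto T. -/

import Mathlib

lemma rpow_two_eq (x : ℝ) : x ^ (2:ℝ) = x * x := by
  rw [show (2:ℝ) = ((2:ℕ):ℝ) by norm_num, Real.rpow_natCast]; ring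

lemma key_ineq (p a bS bT ΦS ΦT : ℝ) (hp1 : 1 ≤ p) (hp2 : p < 2)
    (ha : 0 < a) (hbS : 0 ≤ bS) (hbT : 0 ≤ bT) (hbSa : bS ≤ a) (hbTa : bT ≤ a)
    (hΦS : ΦS = a ^ p - bS ^ p) (hΦT : ΦT = a ^ p - bT ^ p)
    (hST : ΦS ≥ ΦT) (hSpos : 0 < ΦS) (hd : 0 < a ^ (2:ℝ) - bS ^ (2:ℝ)) :
    bT ^ (2 - p) / (a ^ (2:ℝ) - bS ^ (2:ℝ)) ≥ (ΦS - ΦT) ^ (2 / p - 1) / (2 * ΦS ^ (2 / p)) := by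
  have hp0 : 0 < p := by linarith
  set q : ℝ := 2 / p - 1 with hqdef
  have hq : 0 < q := by
    have : 1 < 2 / p := (one_lt_div hp0).mpr hp2
    simp only [hqdef]; linarith
  have hbSp : 0 ≤ bS ^ p := Real.rpow_nonneg hbS p
  have hbTp : bT ^ p ≤ a ^ p := Real.rpow_le_rpow hbT hbTa hp0.le
  have hdiff : bS ^ p ≤ bT ^ p := by rw [hΦS, hΦT] at hST; linarith
  -- Claim A
  have s1 : bS ^ p * a ^ (2 - p) ≤ bS * a := by
    rcases eq_or_lt_of_le hbS with h0 | h0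
    · rw [← h0, Real.zero_rpow (ne_of_gt hp0)]; simp
    · have h1 : bS ^ (p - 1) ≤ a ^ (p - 1) :=
        Real.rpow_le_rpow hbS hbSa (by linarith)
      calc bS ^ p * a ^ (2 - p) = bS ^ (p - 1) * bS * a ^ (2 - p) := by
            rw [← Real.rpow_add_one (ne_of_gt h0)]; ring_nf
        _ ≤ a ^ (p - 1) * bS * a ^ (2 - p) := by
            exact mul_le_mul_of_nonneg_right
              (mul_le_mul_of_nonneg_right h1 hbS) (Real.rpow_nonneg ha.le (2 - p))
        _ = bS * (a ^ (p - 1) * a ^ (2 - p)) := by ring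
        _ = bS * a := by rw [← Real.rpow_add ha]; norm_num
  have s2 : a ^ p * a ^ (2 - p) = a * a := by
    rw [← Real.rpow_add ha, show p + (2 - p) = (2:ℝ) by ring, rpow_two_eq]
  have claimA : a ^ (2:ℝ) - bS ^ (2:ℝ) ≤ 2 * ΦS * a ^ (2 - p) := by
    rw [hΦS, rpow_two_eq, rpow_two_eq]
    nlinarith [sq_nonneg (a - bS)]
  -- Claim B
  have hpq : p * q = 2 - p := by rw [hqdef]; field_simp
  have hB1 : (bT ^ p - bS ^ p) * a ^ p ≤ bT ^ p * ΦS := by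
    rw [hΦS]
    nlinarith [mul_le_mul_of_nonneg_left hbTp hbSp]
  have hB2 : ((bT ^ p - bS ^ p) * a ^ p) ^ q ≤ (bT ^ p * ΦS) ^ q :=
    Real.rpow_le_rpow (mul_nonneg (by linarith) (Real.rpow_nonneg ha.le p)) hB1 hq.le
  rw [Real.mul_rpow (by linarith) (Real.rpow_nonneg ha.le p),
      Real.mul_rpow (Real.rpow_nonneg hbT p) hSpos.le,
      ← Real.rpow_mul ha.le, ← Real.rpow_mul hbT, hpq] at hB2
  -- combine
  have hΦd : ΦS - ΦT = bT ^ p - bS ^ p := by rw [hΦS, hΦT]; ring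
  rw [ge_iff_le, div_le_div_iff₀ (by positivity) hd, hΦd]
  calc (bT ^ p - bS ^ p) ^ q * (a ^ (2:ℝ) - bS ^ (2:ℝ))
      ≤ (bT ^ p - bS ^ p) ^ q * (2 * ΦS * a ^ (2 - p)) :=
        mul_le_mul_of_nonneg_left claimA (Real.rpow_nonneg (by linarith) q)
    _ = 2 * ΦS * ((bT ^ p - bS ^ p) ^ q * a ^ (2 - p)) := by ring
    _ ≤ 2 * ΦS * (bT ^ (2 - p) * ΦS ^ q) :=
        mul_le_mul_of_nonneg_left hB2 (by positivity)
    _ = bT ^ (2 - p) * (2 * (ΦS ^ (1:ℝ) * ΦS ^ q)) := by rw [Real.rpow_one]; ring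
    _ = bT ^ (2 - p) * (2 * ΦS ^ (2 / p)) := by
        rw [← Real.rpow_add hSpos, show (1:ℝ) + q = 2 / p by rw [hqdef]; ring]


/-- With `Φ_u(W) = ‖u‖^p - ‖u - π_W u‖^p`, if
`Φ_u(S) ≥ Φ_u(T) > 0`, `Φ_u(S) > 0`, `π_S u ≠ 0`, and `p ∈ [1,2)`, then
`‖u - π_T u‖^{2-p} / ‖π_S u‖^2 ≥ (Φ_u(S) - Φ_u(T))^{2/p-1} / (2 Φ_u(S)^{2/p})`. -/
theorem stmt11 (d : ℕ) (u : EuclideanSpace ℝ (Fin d))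
    (S T : Submodule ℝ (EuclideanSpace ℝ (Fin d)))
    (p : ℝ) (hp1 : 1 ≤ p) (hp2 : p < 2)
    (ΦS ΦT : ℝ)
    (hΦS : ΦS = ‖u‖ ^ p - ‖u - (Submodule.orthogonalProjectionOnto S u : EuclideanSpace ℝ (Fin d))‖ ^ p)
    (hΦT : ΦT = ‖u‖ ^ p - ‖u - (Submodule.orthogonalProjectionOnto T u : EuclideanSpace ℝ (Fin d))‖ ^ p)
    (hST : ΦS ≥ ΦT) (hTpos : ΦT > 0) (hSpos : ΦS > 0)
    (hproj : (Submodule.orthogonalProjectionOnto S u : EuclideanSpace ℝ (Fin d)) ≠ 0) :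
    ‖u - (Submodule.orthogonalProjectionOnto T u : EuclideanSpace ℝ (Fin d))‖ ^ (2 - p) /
        ‖(Submodule.orthogonalProjectionOnto S u : EuclideanSpace ℝ (Fin d))‖ ^ (2 : ℝ) ≥
      (ΦS - ΦT) ^ (2 / p - 1) / (2 * ΦS ^ (2 / p)) := by
  set a := ‖u‖ with hadef
  set bS := ‖u - (Submodule.orthogonalProjectionOnto S u : EuclideanSpace ℝ (Fin d))‖ with hbSdef
  set bT := ‖u - (Submodule.orthogonalProjectionOnto T u : EuclideanSpace ℝ (Fin d))‖ with hbTdef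
  set c := ‖(Submodule.orthogonalProjectionOnto S u : EuclideanSpace ℝ (Fin d))‖ with hcdef
  have pythS : a * a = bS * bS + c * c := by
    exact Submodule.orthogonalProjectionFn_norm_sq S u
  have pythT : a * a = bT * bT +
      ‖(Submodule.orthogonalProjectionOnto T u : EuclideanSpace ℝ (Fin d))‖ *
      ‖(Submodule.orthogonalProjectionOnto T u : EuclideanSpace ℝ (Fin d))‖ := by
    exact Submodule.orthogonalProjectionFn_norm_sq T u
  have hc : 0 < c := norm_pos_iff.mpr hproj
  have ha0 : 0 ≤ a := norm_nonneg _
  have hbS0 : 0 ≤ bS := norm_nonneg _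
  have hbT0 : 0 ≤ bT := norm_nonneg _
  have ha : 0 < a := by nlinarith
  have hbSa : bS ≤ a := by nlinarith
  have hbTa : bT ≤ a := by nlinarith [norm_nonneg (Submodule.orthogonalProjectionOnto T u : EuclideanSpace ℝ (Fin d))]
  have hcsq : c ^ (2:ℝ) = a ^ (2:ℝ) - bS ^ (2:ℝ) := by
    rw [rpow_two_eq, rpow_two_eq, rpow_two_eq]; linarith
  have hd : 0 < a ^ (2:ℝ) - bS ^ (2:ℝ) := by
    rw [← hcsq, rpow_two_eq]; positivity
  rw [hcsq]
  exact key_ineq p a bS bT ΦS ΦT hp1 hp2 ha hbS0 hbT0 hbSa hbTa hΦS hΦT hST hSpos hd
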